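/- At most n poorly-positioned points in an equiangle sample: let n ≥ 1, K ≥ 8n³, and let p^1,...,p^{n³} ∈ [0,8]^n with p^k = p^{k-1} + (Σ_i e_i)/K. Call a real a ∈ [0,8] poorly-positioned if there exists an integer t ∈ {0,...,7} with |a - t| ≤ 80/K², and call a point poorly-positioned if some coordinate is poorly-positioned. If 160/K² < 1/K - 1/K² (guaranteed for K ≥ 8n³, n³ ≥ 161), then for each coordinate index l ∈ {1,...,n} at most one index k ∈ {1,...,n³} has p^k_l poorly-positioned; consequently at most n of the n³ points are poorly-positioned. -/

import Mathlib

open Classical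

/-- A real number `a` is poorly-positioned if it is within `80/K²` of an integer in
`{0,...,7}`. -/
def PoorlyPositioned (K : ℕ) (a : ℝ) : Prop :=
  ∃ t : ℕ, t ≤ 7 ∧ |a - (t : ℝ)| ≤ 80 / (K : ℝ) ^ 2

/-- In an equiangle sample, each coordinate can be poorly-positioned at at most one
sample point; consequently at most `n` of the `n³` points are poorly-positioned. -/
theorem few_poorly_positioned_points (n K : ℕ) (hn : 1 ≤ n) (hK : 8 * n ^ 3 ≤ K)
    (hgap : 160 / (K : ℝ) ^ 2 < 1 / (K : ℝ) - 1 / (K : ℝ) ^ 2)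
    (p : Fin (n ^ 3) → Fin n → ℝ)
    (hrange : ∀ k i, p k i ∈ Set.Icc (0 : ℝ) 8)
    (hstep : ∀ (k : Fin (n ^ 3)) (h : (k : ℕ) + 1 < n ^ 3) (i : Fin n),
      p ⟨(k : ℕ) + 1, h⟩ i = p k i + 1 / K) :
    (∀ l : Fin n, ∀ k k' : Fin (n ^ 3),
      PoorlyPositioned K (p k l) → PoorlyPositioned K (p k' l) → k = k') ∧
    (Finset.univ.filter (fun k : Fin (n ^ 3) => ∃ l, PoorlyPositioned K (p k l))).card ≤ n := by
  have hn3 : 0 < n ^ 3 := Nat.pow_pos hn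
  have hK8 : 8 ≤ K := le_trans (by nlinarith) hK
  have hKR : (8 : ℝ) * (n : ℝ) ^ 3 ≤ (K : ℝ) := by exact_mod_cast hK
  have hK8R : (8 : ℝ) ≤ (K : ℝ) := by exact_mod_cast hK8
  have hKpos : (0 : ℝ) < K := by linarith
  have haff : ∀ i : Fin n, ∀ j : ℕ, ∀ hj : j < n ^ 3,
      p ⟨j, hj⟩ i = p ⟨0, hn3⟩ i + (j : ℝ) / K := by
    intro i j
    induction j with
    | zero => intro hj; simp
    | succ m ih =>
      intro hj
      have hm : m < n ^ 3 := Nat.lt_of_succ_lt hj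
      rw [hstep ⟨m, hm⟩ hj i, ih hm]
      push_cast; ring
  have key : ∀ l : Fin n, ∀ k k' : Fin (n ^ 3),
      PoorlyPositioned K (p k l) → PoorlyPositioned K (p k' l) → k = k' := by
    rintro l k k' ⟨t, ht7, ht⟩ ⟨t', ht7', ht'⟩
    have h1 : p k l = p ⟨0, hn3⟩ l + ((k : ℕ) : ℝ) / K := by
      have := haff l (k : ℕ) k.isLt
      simpa using this
    have h2 : p k' l = p ⟨0, hn3⟩ l + ((k' : ℕ) : ℝ) / K := by
      have := haff l (k' : ℕ) k'.isLt
      simpa using this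
    rw [h1] at ht
    rw [h2] at ht'
    obtain ⟨ht1, ht2⟩ := abs_le.mp ht
    obtain ⟨ht1', ht2'⟩ := abs_le.mp ht'
    -- bounds on indices
    have hkb : ((k : ℕ) : ℝ) ≤ (n : ℝ) ^ 3 - 1 := by
      have h0 : (k : ℕ) + 1 ≤ n ^ 3 := k.isLt
      have h0' : ((k : ℕ) : ℝ) + 1 ≤ ((n ^ 3 : ℕ) : ℝ) := by exact_mod_cast h0
      push_cast at h0'; linarith
    have hkb' : ((k' : ℕ) : ℝ) ≤ (n : ℝ) ^ 3 - 1 := by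
      have h0 : (k' : ℕ) + 1 ≤ n ^ 3 := k'.isLt
      have h0' : ((k' : ℕ) : ℝ) + 1 ≤ ((n ^ 3 : ℕ) : ℝ) := by exact_mod_cast h0
      push_cast at h0'; linarith
    have hkb0 : (0 : ℝ) ≤ ((k : ℕ) : ℝ) := Nat.cast_nonneg _
    have hkb0' : (0 : ℝ) ≤ ((k' : ℕ) : ℝ) := Nat.cast_nonneg _
    have hK2pos : (0 : ℝ) < (K : ℝ) ^ 2 := by positivity
    have hiK2 : (0 : ℝ) < 1 / (K : ℝ) ^ 2 := by positivity
    have hsmall : ∀ x : ℝ, 0 ≤ x → x ≤ (n : ℝ) ^ 3 - 1 → x / K < 1 / 8 := by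
      intro x hx0 hx1
      rw [div_lt_div_iff₀ hKpos (by norm_num)]
      nlinarith
    have hg : 160 / (K : ℝ) ^ 2 < 1 / 8 := by
      have h1K8 : 1 / (K : ℝ) ≤ 1 / 8 := by
        rw [div_le_div_iff₀ hKpos (by norm_num)]; linarith
      linarith
    have e160 : (160 : ℝ) / (K : ℝ) ^ 2 = 80 / (K : ℝ) ^ 2 + 80 / (K : ℝ) ^ 2 := by
      ring
    rw [e160] at hg hgap
    have hs : |(((k' : ℕ) : ℝ) - ((k : ℕ) : ℝ)) / K| < 1 / 8 := by
      rw [abs_div, abs_of_pos hKpos]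
      exact hsmall _ (abs_nonneg _) (abs_le.mpr ⟨by linarith, by linarith⟩)
    obtain ⟨hs1, hs2⟩ := abs_lt.mp hs
    rw [sub_div] at hs1 hs2
    -- first show t = t'
    have htt : t = t' := by
      rcases lt_trichotomy t t' with h | h | h
      · exfalso
        have hc : ((t : ℝ)) + 1 ≤ (t' : ℝ) := by exact_mod_cast h
        linarith [ht1', ht2, hc, hg, hs2]
      · exact h
      · exfalso
        have hc : ((t' : ℝ)) + 1 ≤ (t : ℝ) := by exact_mod_cast h
        linarith [ht1, ht2', hc, hg, hs1]
    subst htt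
    -- now show k = k'
    have hkk : (k : ℕ) = (k' : ℕ) := by
      rcases lt_trichotomy (k : ℕ) (k' : ℕ) with h | h | h
      · exfalso
        have hc : ((k : ℕ) : ℝ) + 1 ≤ ((k' : ℕ) : ℝ) := by exact_mod_cast h
        have h1K : (1 : ℝ) / K ≤ (((k' : ℕ) : ℝ) - ((k : ℕ) : ℝ)) / K := by
          gcongr <;> linarith
        rw [sub_div] at h1K
        linarith
      · exact h
      · exfalso
        have hc : ((k' : ℕ) : ℝ) + 1 ≤ ((k : ℕ) : ℝ) := by exact_mod_cast h
        have h1K : (1 : ℝ) / K ≤ (((k : ℕ) : ℝ) - ((k' : ℕ) : ℝ)) / K := by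
          gcongr <;> linarith
        rw [sub_div] at h1K
        linarith
    exact Fin.ext hkk
  refine ⟨key, ?_⟩
  have hinj : ∀ a ∈ Finset.univ.filter (fun k : Fin (n ^ 3) => ∃ l, PoorlyPositioned K (p k l)),
      True := fun _ _ => trivial
  classical
  have := Finset.card_le_card_of_injOn
    (f := fun k : Fin (n ^ 3) =>
      if h : ∃ l, PoorlyPositioned K (p k l) then h.choose else ⟨0, hn⟩)
    (s := Finset.univ.filter (fun k : Fin (n ^ 3) => ∃ l, PoorlyPositioned K (p k l)))
    (t := (Finset.univ : Finset (Fin n)))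
    (fun a _ => Finset.mem_univ _)
    (by
      intro a ha b hb hab
      simp only [Finset.mem_coe, Finset.mem_filter] at ha hb
      obtain ⟨-, ha⟩ := ha
      obtain ⟨-, hb⟩ := hb
      dsimp only at hab
      rw [dif_pos ha, dif_pos hb] at hab
      exact key _ a b (hab ▸ ha.choose_spec) hb.choose_spec)
  simpa using this
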